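/- arXiv:1407.3604 — 7 statements merged into one kernel-verified Lean document; each statement's English description precedes it below -/
import Mathlib

section
/- For every natural number n ≥ 1, every n-almost disjoint family 𝒳 of countable sets is essentially disjoint; that is, there is a choice of a finite subset F(A) ⊆ A for each A ∈ 𝒳 such that the family {A \ F(A) : A ∈ 𝒳} is pairwise disjoint. -/
open Cardinal Set

universe u

namespace EssDisjAux

variable {α : Type u}

/-- A set with no `n`-element finite subset is finite. -/
lemma finite_of_no_nsubset {n : ℕ} {s : Set α}
    (h : ∀ t : Finset α, ↑t ⊆ s → t.card ≠ n) : s.Finite := by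
  by_contra hs
  have hs' : s.Infinite := hs
  obtain ⟨t, hts, htc⟩ := hs'.exists_subset_card_eq n
  exact h t hts htc

/-- Union of a subfamily. -/
def U (𝒳 : Set (Set α)) (S : Set ↥𝒳) : Set α := ⋃ A ∈ S, (A : Set α)

lemma U_mono {𝒳 : Set (Set α)} {S T : Set ↥𝒳} (h : S ⊆ T) : U 𝒳 S ⊆ U 𝒳 T :=
  Set.biUnion_subset_biUnion_left h

lemma subset_U {𝒳 : Set (Set α)} {S : Set ↥𝒳} {A : ↥𝒳} (h : A ∈ S) :
    (A : Set α) ⊆ U 𝒳 S := Set.subset_biUnion_of_mem h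

/-- One closure step: add all members containing an `n`-element subset of the union. -/
def stp (n : ℕ) (𝒳 : Set (Set α)) (S : Set ↥𝒳) : Set ↥𝒳 :=
  S ∪ {A : ↥𝒳 | ∃ t : Finset α, t.card = n ∧ ↑t ⊆ (A : Set α) ∩ U 𝒳 S}

lemma subset_stp (n : ℕ) (𝒳 : Set (Set α)) (S : Set ↥𝒳) : S ⊆ stp n 𝒳 S :=
  Set.subset_union_left

lemma stp_mono (n : ℕ) (𝒳 : Set (Set α)) {S T : Set ↥𝒳} (h : S ⊆ T) :
    stp n 𝒳 S ⊆ stp n 𝒳 T := by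
  apply Set.union_subset_union h
  rintro A ⟨t, htc, hts⟩
  exact ⟨t, htc, hts.trans (Set.inter_subset_inter_right _ (U_mono h))⟩

/-- The closure. -/
def cl (n : ℕ) (𝒳 : Set (Set α)) (S : Set ↥𝒳) : Set ↥𝒳 := ⋃ k, (stp n 𝒳)^[k] S

lemma iterate_mono_k (n : ℕ) (𝒳 : Set (Set α)) (S : Set ↥𝒳) :
    Monotone (fun k => (stp n 𝒳)^[k] S) := by
  apply monotone_nat_of_le_succ
  intro k
  rw [Function.iterate_succ_apply']
  exact subset_stp n 𝒳 _

lemma subset_cl (n : ℕ) (𝒳 : Set (Set α)) (S : Set ↥𝒳) : S ⊆ cl n 𝒳 S :=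
  fun A h => Set.mem_iUnion.2 ⟨0, h⟩

lemma cl_mono (n : ℕ) (𝒳 : Set (Set α)) {S T : Set ↥𝒳} (h : S ⊆ T) :
    cl n 𝒳 S ⊆ cl n 𝒳 T := by
  apply Set.iUnion_mono
  intro k
  induction k with
  | zero => exact h
  | succ k ih => rw [Function.iterate_succ_apply', Function.iterate_succ_apply']
                 exact stp_mono n 𝒳 ih

lemma cl_closed (n : ℕ) (𝒳 : Set (Set α)) (S : Set ↥𝒳) {A : ↥𝒳} {t : Finset α}
    (htc : t.card = n) (hts : ↑t ⊆ (A : Set α) ∩ U 𝒳 (cl n 𝒳 S)) : A ∈ cl n 𝒳 S := by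
  have hUeq : U 𝒳 (cl n 𝒳 S) = ⋃ k, U 𝒳 ((stp n 𝒳)^[k] S) := by
    ext x
    simp only [U, cl, Set.mem_iUnion, Set.mem_iUnion]
    tauto
  have hdir : Directed (· ⊆ ·) (fun k => U 𝒳 ((stp n 𝒳)^[k] S)) :=
    (Monotone.directed_le fun i j hij => U_mono (iterate_mono_k n 𝒳 S hij))
  have ht2 : (↑t : Set α) ⊆ ⋃ k, U 𝒳 ((stp n 𝒳)^[k] S) := by
    rw [← hUeq]; exact fun x hx => (hts hx).2
  obtain ⟨k, hk⟩ := hdir.exists_mem_subset_of_finset_subset_biUnion ht2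
  refine Set.mem_iUnion.2 ⟨k + 1, ?_⟩
  rw [Function.iterate_succ_apply']
  exact Set.mem_union_right _
    ⟨t, htc, Set.subset_inter (fun x hx => (hts hx).1) hk⟩

lemma mk_finset_le (β : Type u) : #(Finset β) ≤ max #β ℵ₀ := by
  rcases finite_or_infinite β with hf | hi
  · exact le_max_of_le_right (mk_le_aleph0_iff.2 inferInstance)
  · exact le_max_of_le_left (mk_finset_of_infinite β).le

lemma U_card {𝒳 : Set (Set α)} (hcount : ∀ A ∈ 𝒳, A.Countable) (S : Set ↥𝒳) :
    #↥(U 𝒳 S) ≤ max #↥S ℵ₀ := by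
  have h1 : U 𝒳 S = ⋃ A : ↥S, ((A : ↥𝒳) : Set α) := by
    rw [U, Set.biUnion_eq_iUnion]
  rw [h1]
  calc #↥(⋃ A : ↥S, ((A : ↥𝒳) : Set α))
      ≤ Cardinal.sum (fun A : ↥S => #↥((A : ↥𝒳) : Set α)) := Cardinal.mk_iUnion_le_sum_mk
    _ ≤ Cardinal.sum (fun _ : ↥S => ℵ₀) := by
        apply Cardinal.sum_le_sum
        intro A
        exact (Cardinal.le_aleph0_iff_set_countable).2 (hcount _ (A : ↥𝒳).2)
    _ = #↥S * ℵ₀ := Cardinal.sum_const' _ _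
    _ ≤ max (max #↥S ℵ₀) ℵ₀ := Cardinal.mul_le_max _ _
    _ = max #↥S ℵ₀ := by rw [max_assoc, max_self]

lemma stp_card (n : ℕ) {𝒳 : Set (Set α)} (hcount : ∀ A ∈ 𝒳, A.Countable)
    (had : ∀ A ∈ 𝒳, ∀ B ∈ 𝒳, A ≠ B →
      ∀ t : Finset α, ↑t ⊆ A ∩ B → t.card ≠ n) (S : Set ↥𝒳) :
    #↥(stp n 𝒳 S) ≤ max #↥S ℵ₀ := by
  classical
  have hT : #↥{A : ↥𝒳 | ∃ t : Finset α, t.card = n ∧ ↑t ⊆ (A : Set α) ∩ U 𝒳 S}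
      ≤ max #↥S ℵ₀ := by
    set T := {A : ↥𝒳 | ∃ t : Finset α, t.card = n ∧ ↑t ⊆ (A : Set α) ∩ U 𝒳 S} with hTdef
    have hch : ∀ A : ↥T, ∃ t : Finset α, t.card = n ∧ ↑t ⊆ ((A : ↥𝒳) : Set α) ∩ U 𝒳 S :=
      fun A => A.2
    choose tf htc hts using hch
    have hinj : Function.Injective
        (fun A : ↥T => (tf A).subtype (· ∈ U 𝒳 S)) := by
      intro A B hAB
      have hA : ((tf A).subtype (· ∈ U 𝒳 S)).map (Function.Embedding.subtype _) = tf A :=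
        Finset.subtype_map_of_mem (fun x hx => ((hts A) hx).2)
      have hB : ((tf B).subtype (· ∈ U 𝒳 S)).map (Function.Embedding.subtype _) = tf B :=
        Finset.subtype_map_of_mem (fun x hx => ((hts B) hx).2)
      have htEq : tf A = tf B := by rw [← hA, ← hB]; exact congrArg _ hAB
      by_contra hne
      have hset : ((A : ↥𝒳) : Set α) ≠ ((B : ↥𝒳) : Set α) := by
        intro h
        exact hne (Subtype.ext (Subtype.ext h))
      refine had _ (A : ↥𝒳).2 _ (B : ↥𝒳).2 hset (tf A) ?_ (htc A)
      intro x hx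
      have hx' : x ∈ (↑(tf B) : Set α) := by rw [← htEq]; exact hx
      exact ⟨((hts A) hx).1, ((hts B) hx').1⟩
    calc #↥T ≤ #(Finset ↥(U 𝒳 S)) := Cardinal.mk_le_of_injective hinj
      _ ≤ max #↥(U 𝒳 S) ℵ₀ := mk_finset_le _
      _ ≤ max (max #↥S ℵ₀) ℵ₀ := max_le_max_right _ (U_card hcount S)
      _ = max #↥S ℵ₀ := by rw [max_assoc, max_self]
  calc #↥(stp n 𝒳 S) ≤ #↥S + _ := Cardinal.mk_union_le _ _
    _ ≤ max #↥S ℵ₀ + max #↥S ℵ₀ := add_le_add le_sup_left hT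
    _ ≤ max (max (max #↥S ℵ₀) (max #↥S ℵ₀)) ℵ₀ := Cardinal.add_le_max _ _
    _ = max #↥S ℵ₀ := by rw [max_self, max_assoc, max_self]

lemma cl_card (n : ℕ) {𝒳 : Set (Set α)} (hcount : ∀ A ∈ 𝒳, A.Countable)
    (had : ∀ A ∈ 𝒳, ∀ B ∈ 𝒳, A ≠ B →
      ∀ t : Finset α, ↑t ⊆ A ∩ B → t.card ≠ n) (S : Set ↥𝒳) :
    #↥(cl n 𝒳 S) ≤ max #↥S ℵ₀ := by
  have hiter : ∀ k, #↥((stp n 𝒳)^[k] S) ≤ max #↥S ℵ₀ := by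
    intro k
    induction k with
    | zero => exact le_max_left _ _
    | succ k ih =>
        rw [Function.iterate_succ_apply']
        calc #↥(stp n 𝒳 ((stp n 𝒳)^[k] S)) ≤ max #↥((stp n 𝒳)^[k] S) ℵ₀ :=
              stp_card n hcount had _
          _ ≤ max (max #↥S ℵ₀) ℵ₀ := max_le_max_right _ ih
          _ = max #↥S ℵ₀ := by rw [max_assoc, max_self]
  have hre : cl n 𝒳 S = ⋃ k : ULift.{u} ℕ, (stp n 𝒳)^[k.down] S := by
    ext A
    simp only [cl, Set.mem_iUnion]
    exact ⟨fun ⟨k, h⟩ => ⟨⟨k⟩, h⟩, fun ⟨k, h⟩ => ⟨k.down, h⟩⟩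
  rw [hre]
  calc #↥(⋃ k : ULift.{u} ℕ, (stp n 𝒳)^[k.down] S)
      ≤ Cardinal.sum (fun k : ULift.{u} ℕ => #↥((stp n 𝒳)^[k.down] S)) :=
        Cardinal.mk_iUnion_le_sum_mk
    _ ≤ Cardinal.sum (fun _ : ULift.{u} ℕ => max #↥S ℵ₀) :=
        Cardinal.sum_le_sum _ _ (fun k => hiter k.down)
    _ = #(ULift.{u} ℕ) * max #↥S ℵ₀ := Cardinal.sum_const' _ _
    _ ≤ max (max #(ULift.{u} ℕ) (max #↥S ℵ₀)) ℵ₀ := Cardinal.mul_le_max _ _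
    _ ≤ max #↥S ℵ₀ := by
        apply max_le _ le_sup_right
        apply max_le _ le_rfl
        exact le_sup_of_le_right (mk_le_aleph0_iff.2 inferInstance)

end EssDisjAux

open EssDisjAux in
private theorem ad_aux {α : Type u} (n : ℕ) (hn : 1 ≤ n) (κ : Cardinal.{u}) :
    ∀ 𝒳 : Set (Set α), #↥𝒳 ≤ κ → (∀ A ∈ 𝒳, A.Countable) →
      (∀ A ∈ 𝒳, ∀ B ∈ 𝒳, A ≠ B → Cardinal.mk ↥(A ∩ B) < (n : Cardinal)) →
      ∃ F : Set α → Set α,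
        (∀ A ∈ 𝒳, F A ⊆ A ∧ (F A).Finite) ∧
        (∀ A ∈ 𝒳, ∀ B ∈ 𝒳, A ≠ B → Disjoint (A \ F A) (B \ F B)) := by
  induction κ using WellFoundedLT.induction with
  | _ κ IH =>
  intro 𝒳 hκ hcount had
  classical
  -- no n-element subset of an intersection
  have hfin : ∀ A ∈ 𝒳, ∀ B ∈ 𝒳, A ≠ B →
      ∀ t : Finset α, ↑t ⊆ A ∩ B → t.card ≠ n := by
    intro A hA B hB hAB t hts htc
    have h1 : (n : Cardinal) ≤ #↥(A ∩ B) := by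
      have h2 := Cardinal.mk_le_mk_of_subset hts
      simp only [Finset.coe_sort_coe, Cardinal.mk_coe_finset, htc] at h2
      exact h2
    exact absurd (had A hA B hB hAB) (not_lt.2 h1)
  by_cases hcnt : #↥𝒳 ≤ ℵ₀
  · -- countable case
    rcases Set.eq_empty_or_nonempty 𝒳 with rfl | hne
    · exact ⟨fun _ => ∅, by simp, by simp⟩
    have hXc : 𝒳.Countable := Cardinal.le_aleph0_iff_set_countable.1 hcnt
    obtain ⟨f, hf⟩ := hXc.exists_eq_range hne
    have hfm : ∀ k, f k ∈ 𝒳 := fun k => hf ▸ Set.mem_range_self k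
    have hex : ∀ A ∈ 𝒳, ∃ k, f k = A := by
      intro A hA
      rw [hf] at hA
      exact hA
    refine ⟨fun A => if h : ∃ k, f k = A then A ∩ ⋃ k ∈ Finset.range (Nat.find h), f k
      else ∅, ?_, ?_⟩
    · intro A hA
      dsimp only
      rw [dif_pos (hex A hA)]
      refine ⟨Set.inter_subset_left, ?_⟩
      have heq : A ∩ ⋃ k ∈ Finset.range (Nat.find (hex A hA)), f k
          = ⋃ k ∈ Finset.range (Nat.find (hex A hA)), (A ∩ f k) := by
        rw [Set.inter_iUnion₂]
      rw [heq]
      apply Set.Finite.biUnion (Finset.range _).finite_toSet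
      intro k hk
      have hkA : f k ≠ A := fun h => Nat.find_min (hex A hA) (Finset.mem_range.1 hk) h
      have hlt : #↥(A ∩ f k) < ℵ₀ :=
        (had A hA (f k) (hfm k) (Ne.symm hkA)).trans_le (Cardinal.nat_lt_aleph0 n).le
      rw [Cardinal.lt_aleph0_iff_finite, Set.finite_coe_iff] at hlt
      exact hlt
    · have key : ∀ A, ∀ hA : A ∈ 𝒳, ∀ B, ∀ hB : B ∈ 𝒳,
          Nat.find (hex A hA) < Nat.find (hex B hB) →
          Disjoint (A \ (if h : ∃ k, f k = A then
              A ∩ ⋃ k ∈ Finset.range (Nat.find h), f k else ∅))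
            (B \ (if h : ∃ k, f k = B then
              B ∩ ⋃ k ∈ Finset.range (Nat.find h), f k else ∅)) := by
        intro A hA B hB hlt
        rw [Set.disjoint_left]
        intro x hxA hxB
        rw [dif_pos (hex B hB)] at hxB
        apply hxB.2
        refine ⟨hxB.1, ?_⟩
        refine Set.mem_biUnion (Finset.mem_range.2 hlt) ?_
        rw [Nat.find_spec (hex A hA)]
        exact hxA.1
      intro A hA B hB hAB
      rcases lt_trichotomy (Nat.find (hex A hA)) (Nat.find (hex B hB)) with h | h | h
      · exact key A hA B hB h
      · exfalso
        apply hAB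
        rw [← Nat.find_spec (hex A hA), ← Nat.find_spec (hex B hB), h]
      · exact (key B hB A hA h).symm
  · -- uncountable case
    push_neg at hcnt
    by_cases hlt : #↥𝒳 < κ
    · exact IH _ hlt 𝒳 le_rfl hcount had
    have hκeq : κ = #↥𝒳 := le_antisymm (not_lt.1 hlt) hκ
    have hℵκ : ℵ₀ < κ := hκeq ▸ hcnt
    obtain ⟨r, wo, hty⟩ := Cardinal.ord_eq ↥𝒳
    haveI := wo
    have hseg : ∀ x : ↥𝒳, #{y : ↥𝒳 // r y x} < κ := by
      intro x
      have h1 := Cardinal.card_typein_lt (r := r) x hty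
      rw [Ordinal.card_typein] at h1
      exact hκeq ▸ h1
    -- the filtration
    set D : ↥𝒳 → Set ↥𝒳 := fun x => cl n 𝒳 {y : ↥𝒳 | r y x ∨ y = x} with hD
    have hDself : ∀ x, x ∈ D x := fun x => subset_cl n 𝒳 _ (Or.inr rfl)
    have hDmono : ∀ x y : ↥𝒳, r x y → D x ⊆ D y := by
      intro x y hxy
      apply cl_mono
      rintro z (hz | rfl)
      · exact Or.inl (_root_.trans hz hxy)
      · exact Or.inl hxy
    have hDcard : ∀ x, #↥(D x) < κ := by
      intro x
      have h1 : #↥(D x) ≤ max #↥{y : ↥𝒳 | r y x ∨ y = x} ℵ₀ :=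
        cl_card n hcount hfin _
      have h2 : #↥{y : ↥𝒳 | r y x ∨ y = x} < κ := by
        have he : {y : ↥𝒳 | r y x ∨ y = x} = {y : ↥𝒳 | r y x} ∪ {x} := by
          ext y; simp [Set.mem_setOf_eq, or_comm]
        rw [he]
        calc #↥({y : ↥𝒳 | r y x} ∪ {x}) ≤ #↥{y : ↥𝒳 | r y x} + #↥({x} : Set ↥𝒳) :=
              Cardinal.mk_union_le _ _
          _ < κ := by
              apply Cardinal.add_lt_of_lt hℵκ.le
              · exact hseg x
              · rw [Cardinal.mk_singleton]
                exact lt_of_lt_of_le Cardinal.one_lt_aleph0 hℵκ.le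
      exact lt_of_le_of_lt h1 (max_lt h2 hℵκ)
    -- the rank function
    have hDne : ∀ A : ↥𝒳, {x : ↥𝒳 | A ∈ D x}.Nonempty := fun A => ⟨A, hDself A⟩
    set σ : ↥𝒳 → ↥𝒳 := fun A => wo.wf.min {x : ↥𝒳 | A ∈ D x} (hDne A) with hσ
    have hσ1 : ∀ A, A ∈ D (σ A) := fun A => wo.wf.min_mem _ (hDne A)
    have hσ2 : ∀ A y, r y (σ A) → A ∉ D y := by
      intro A y hy hmem
      exact wo.wf.not_lt_min {x : ↥𝒳 | A ∈ D x} hmem hy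
    -- the slices
    set 𝒮 : ↥𝒳 → Set (Set α) := fun x => {B | ∃ h : B ∈ 𝒳, σ ⟨B, h⟩ = x} with h𝒮
    have hslice_card : ∀ x, #↥(𝒮 x) < κ := by
      intro x
      have h1 : #↥(𝒮 x) ≤ #↥(D x) := by
        have hmemD : ∀ B : ↥(𝒮 x), (⟨B.1, B.2.choose⟩ : ↥𝒳) ∈ D x := by
          intro B
          have h0 := hσ1 ⟨B.1, B.2.choose⟩
          rwa [B.2.choose_spec] at h0
        refine Cardinal.mk_le_of_injective
          (f := fun B : ↥(𝒮 x) => (⟨⟨B.1, B.2.choose⟩, hmemD B⟩ : ↥(D x))) ?_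
        intro B C hBC
        apply Subtype.ext
        have := congrArg (fun z : ↥(D x) => (z.1 : Set α)) hBC
        exact this
      exact lt_of_le_of_lt h1 (hDcard x)
    -- apply the inductive hypothesis to each slice
    have hIH : ∀ x : ↥𝒳, ∃ F : Set α → Set α,
        (∀ A ∈ 𝒮 x, F A ⊆ A ∧ (F A).Finite) ∧
        (∀ A ∈ 𝒮 x, ∀ B ∈ 𝒮 x, A ≠ B → Disjoint (A \ F A) (B \ F B)) := by
      intro x
      refine IH _ (hslice_card x) (𝒮 x) le_rfl ?_ ?_
      · intro A hA
        exact hcount A hA.choose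
      · intro A hA B hB hAB
        exact had A hA.choose B hB.choose hAB
    choose G hG1 hG2 using hIH
    -- the finite sets coming from earlier stages
    set prev : ↥𝒳 → Set α := fun a =>
      (a : Set α) ∩ ⋃ y : {y : ↥𝒳 // r y (σ a)}, U 𝒳 (D y.1) with hprev
    have hprev_fin : ∀ a, (prev a).Finite := by
      intro a
      apply finite_of_no_nsubset
      intro t hts htc
      have htne : t.Nonempty := Finset.card_pos.1 (htc ▸ hn)
      have hx0 := hts htne.choose_spec
      have hne2 : Nonempty {y : ↥𝒳 // r y (σ a)} := by
        obtain ⟨-, hmem⟩ := hx0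
        obtain ⟨s, ⟨y, rfl⟩, hxs⟩ := hmem
        exact ⟨y⟩
      have hdir : Directed (· ⊆ ·) (fun y : {y : ↥𝒳 // r y (σ a)} => U 𝒳 (D y.1)) := by
        intro y z
        rcases trichotomous_of r y.1 z.1 with h | h | h
        · exact ⟨z, U_mono (hDmono _ _ h), le_rfl⟩
        · refine ⟨z, ?_, le_rfl⟩
          dsimp only
          rw [h]
        · exact ⟨y, le_rfl, U_mono (hDmono _ _ h)⟩
      have ht2 : (↑t : Set α) ⊆ ⋃ y : {y : ↥𝒳 // r y (σ a)}, U 𝒳 (D y.1) :=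
        fun x hx => (hts hx).2
      obtain ⟨y, hy⟩ := hdir.exists_mem_subset_of_finset_subset_biUnion ht2
      have hmem : a ∈ D y.1 :=
        cl_closed n 𝒳 _ htc (Set.subset_inter (fun x hx => (hts hx).1) hy)
      exact hσ2 a y.1 y.2 hmem
    have hprev_inter : ∀ a b : ↥𝒳, r (σ b) (σ a) →
        ((a : Set α) ∩ (b : Set α)) ⊆ prev a := by
      intro a b hr x hx
      refine ⟨hx.1, ?_⟩
      refine Set.mem_iUnion.2 ⟨⟨σ b, hr⟩, ?_⟩
      exact subset_U (hσ1 b) hx.2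
    -- assemble the final function
    refine ⟨fun A => if h : A ∈ 𝒳 then prev ⟨A, h⟩ ∪ G (σ ⟨A, h⟩) A else ∅, ?_, ?_⟩
    · intro A hA
      dsimp only
      rw [dif_pos hA]
      have hmem : A ∈ 𝒮 (σ ⟨A, hA⟩) := ⟨hA, rfl⟩
      constructor
      · exact Set.union_subset Set.inter_subset_left (hG1 _ A hmem).1
      · exact (hprev_fin _).union (hG1 _ A hmem).2
    · intro A hA B hB hAB
      dsimp only
      rw [dif_pos hA, dif_pos hB]
      set a : ↥𝒳 := ⟨A, hA⟩
      set b : ↥𝒳 := ⟨B, hB⟩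
      rcases trichotomous_of r (σ a) (σ b) with h | h | h
      · -- σ a ≺ σ b : A ∩ B ⊆ prev b
        rw [Set.disjoint_left]
        intro x hxA hxB
        exact hxB.2 (Or.inl (hprev_inter b a h ⟨hxB.1, hxA.1⟩))
      · -- equal slices
        have hmA : A ∈ 𝒮 (σ a) := ⟨hA, rfl⟩
        have hmB : B ∈ 𝒮 (σ a) := ⟨hB, h ▸ rfl⟩
        have hd := hG2 (σ a) A hmA B hmB hAB
        rw [← h]
        refine hd.mono ?_ ?_
        · exact Set.diff_subset_diff_right Set.subset_union_right
        · exact Set.diff_subset_diff_right Set.subset_union_right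
      · -- σ b ≺ σ a : A ∩ B ⊆ prev a
        rw [Set.disjoint_left]
        intro x hxA hxB
        exact hxA.2 (Or.inl (hprev_inter a b h ⟨hxA.1, hxB.1⟩))

/-- Every `n`-almost disjoint family of countable sets (i.e. `|A ∩ B| < n` for distinct
members) is essentially disjoint: one can remove a finite set from each member so that the
resulting family is pairwise disjoint. -/
theorem essentially_disjoint_of_almost_disjoint {α : Type*} (n : ℕ) (hn : 1 ≤ n)
    (𝒳 : Set (Set α)) (hcount : ∀ A ∈ 𝒳, A.Countable)
    (had : ∀ A ∈ 𝒳, ∀ B ∈ 𝒳, A ≠ B → Cardinal.mk ↥(A ∩ B) < (n : Cardinal)) :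
    ∃ F : Set α → Set α,
      (∀ A ∈ 𝒳, F A ⊆ A ∧ (F A).Finite) ∧
      (∀ A ∈ 𝒳, ∀ B ∈ 𝒳, A ≠ B → Disjoint (A \ F A) (B \ F B)) := by
  exact ad_aux n hn (#↥𝒳) 𝒳 le_rfl hcount had
end

section
/- For each natural number n, if 2^ℵ₀ ≤ ℵ_n then there exist n + 2 points a₀, …, a_{n+1} ∈ ℝ² in general position (no three collinear) and sets A₀, …, A_{n+1} ⊆ ℝ² such that A_k is a cloud around a_k for each k < n + 2 and ℝ² = A₀ ∪ ⋯ ∪ A_{n+1}. -/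
/-- `A` is a cloud around `a` iff every (affine) line through `a`
intersects `A` in a finite set. Lines through `a` are parametrized as
`{a + t • v : t ∈ ℝ}` for a nonzero direction `v`. -/
def IsCloud (a : ℝ × ℝ) (A : Set (ℝ × ℝ)) : Prop :=
  ∀ v : ℝ × ℝ, v ≠ 0 → (A ∩ {p | ∃ t : ℝ, p = a + t • v}).Finite

namespace KomjathCloud

open Cardinal Set

open Cardinal Set

/-- The cross product of two planar vectors. -/
def cross (u v : ℝ × ℝ) : ℝ := u.1 * v.2 - u.2 * v.1

lemma cross_swap_base (A p q : ℝ × ℝ) :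
    cross (p - A) (q - A) = cross (q - p) (A - p) := by
  simp only [cross, Prod.fst_sub, Prod.snd_sub]
  ring

lemma cross_cancel {d u w : ℝ × ℝ} (hd : d ≠ 0) (h1 : cross d u = 0) (h2 : cross d w = 0) :
    cross u w = 0 := by
  have hd' : d.1 ≠ 0 ∨ d.2 ≠ 0 := by
    by_contra hcon
    push_neg at hcon
    exact hd (Prod.ext hcon.1 hcon.2)
  simp only [cross] at h1 h2 ⊢
  rcases hd' with hh | hh
  · have key : d.1 * (u.1 * w.2 - u.2 * w.1) = 0 := by linear_combination u.1 * h2 - w.1 * h1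
    rcases mul_eq_zero.mp key with h' | h'
    · exact absurd h' hh
    · exact h'
  · have key : d.2 * (u.1 * w.2 - u.2 * w.1) = 0 := by linear_combination u.2 * h2 - w.2 * h1
    rcases mul_eq_zero.mp key with h' | h'
    · exact absurd h' hh
    · exact h'

/-- The "slope code" of the line through `A` and `p`. -/
noncomputable def code (A p : ℝ × ℝ) : Option ℝ :=
  if p.1 = A.1 then none else some ((p.2 - A.2) / (p.1 - A.1))

/-- The "slope code" of a direction vector. -/
noncomputable def vcode (v : ℝ × ℝ) : Option ℝ :=
  if v.1 = 0 then none else some (v.2 / v.1)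

lemma code_line {A p v : ℝ × ℝ} (t : ℝ) (hp : p = A + t • v) (hpA : p ≠ A) :
    code A p = vcode v := by
  have hco1 : p.1 = A.1 + t * v.1 := by rw [hp]; simp [Prod.fst_add]
  have hco2 : p.2 = A.2 + t * v.2 := by rw [hp]; simp [Prod.snd_add]
  have ht : t ≠ 0 := by
    intro h
    apply hpA
    rw [hp, h, zero_smul, add_zero]
  by_cases hv1 : v.1 = 0
  · have : p.1 = A.1 := by rw [hco1, hv1, mul_zero, add_zero]
    simp [code, vcode, this, hv1]
  · have hne : p.1 ≠ A.1 := by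
      rw [hco1]
      intro hcon
      have : t * v.1 = 0 := by linarith
      exact hv1 ((mul_eq_zero.mp this).resolve_left ht)
    simp only [code, vcode, hne, hv1, if_false]
    congr 1
    rw [hco1, hco2]
    have : A.1 + t * v.1 - A.1 = t * v.1 := by ring
    rw [this, show A.2 + t * v.2 - A.2 = t * v.2 by ring]
    rw [mul_div_mul_left _ _ ht]

lemma code_eq_cross {A p q : ℝ × ℝ} (h : code A p = code A q) :
    cross (p - A) (q - A) = 0 := by
  simp only [code] at h
  by_cases hp : p.1 = A.1 <;> by_cases hq : q.1 = A.1 <;>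
    simp only [hp, hq, if_true, if_false] at h
  · simp only [cross, Prod.fst_sub, Prod.snd_sub, hp, hq]
    ring
  · exact absurd h (by simp)
  · exact absurd h (by simp)
  · have h' := Option.some.inj h
    have hp' : p.1 - A.1 ≠ 0 := sub_ne_zero.mpr hp
    have hq' : q.1 - A.1 ≠ 0 := sub_ne_zero.mpr hq
    field_simp at h'
    simp only [cross, Prod.fst_sub, Prod.snd_sub]
    linear_combination -h'

/-- The marked points: on the parabola. -/
noncomputable def pts (m : ℕ) : Fin m → ℝ × ℝ := fun k => (((k : ℕ) : ℝ), ((k : ℕ) : ℝ) ^ 2)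

lemma gp (m : ℕ) (i j k : Fin m) (hij : i ≠ j) (hjk : j ≠ k) (hik : i ≠ k) :
    cross (pts m j - pts m i) (pts m k - pts m i) ≠ 0 := by
  have cast_ne : ∀ i' j' : Fin m, i' ≠ j' → ((i' : ℕ) : ℝ) ≠ ((j' : ℕ) : ℝ) := by
    intro i' j' hne hcon
    exact hne (Fin.ext (Nat.cast_injective hcon))
  have hexp : cross (pts m j - pts m i) (pts m k - pts m i)
      = (((j : ℕ) : ℝ) - ((i : ℕ) : ℝ)) * ((((k : ℕ) : ℝ)) - ((i : ℕ) : ℝ))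
        * ((((k : ℕ) : ℝ)) - ((j : ℕ) : ℝ)) := by
    simp only [cross, pts, Prod.fst_sub, Prod.snd_sub]
    ring
  rw [hexp]
  exact mul_ne_zero (mul_ne_zero (sub_ne_zero.mpr (cast_ne _ _ hij.symm))
    (sub_ne_zero.mpr (cast_ne _ _ hik.symm))) (sub_ne_zero.mpr (cast_ne _ _ hjk.symm))


lemma line_unique {A B C v : ℝ × ℝ}
    (hBA : cross (B - A) (C - A) ≠ 0) (t₁ t₂ : ℝ)
    (h1 : cross (B - A) ((C + t₁ • v) - A) = 0)
    (h2 : cross (B - A) ((C + t₂ • v) - A) = 0) :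
    t₁ = t₂ := by
  by_contra hne
  have hexp : ∀ t : ℝ, cross (B - A) ((C + t • v) - A)
      = cross (B - A) (C - A) + t * cross (B - A) v := by
    intro t
    simp only [cross, Prod.fst_sub, Prod.snd_sub, Prod.fst_add, Prod.snd_add,
      Prod.smul_fst, Prod.smul_snd, smul_eq_mul]
    ring
  rw [hexp] at h1 h2
  have hcv : cross (B - A) v = 0 := by
    have h3 : (t₁ - t₂) * cross (B - A) v = 0 := by linarith
    exact (mul_eq_zero.mp h3).resolve_left (sub_ne_zero.mpr hne)
  apply hBA
  rw [hcv, mul_zero, add_zero] at h1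
  exact h1


/-- Key combinatorial lemma: a "linear" hypergraph (any two distinct vertices lie in
at most one common edge) with edges of size at least `t+2` on a vertex set of
cardinality at most `ℵ_t` admits an orientation (a choice of a vertex in each edge)
such that every vertex is chosen only finitely often. -/
theorem cloud_orient (t : ℕ) : ∀ {V ι : Type} (e : ι → Finset V),
    Cardinal.mk V ≤ Cardinal.aleph t →
    (∀ p, t + 2 ≤ (e p).card) →
    (∀ p q : ι, p ≠ q → ∀ v w : V, v ∈ e p → v ∈ e q → w ∈ e p → w ∈ e q → v = w) →
    ∃ f : ι → V, (∀ p, f p ∈ e p) ∧ ∀ v : V, {p | f p = v}.Finite := by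
  induction t with
  | zero =>
    intro V ι e hV hcard hlin
    classical
    have hcount : Countable V := mk_le_aleph0_iff.mp (by simpa using hV)
    obtain ⟨g, hg⟩ := (countable_iff_exists_injective V).mp hcount
    have hne : ∀ p, (e p).Nonempty := fun p => Finset.card_pos.mp (by have := hcard p; omega)
    have hmax := fun p => (e p).exists_max_image g (hne p)
    choose f hf1 hf2 using hmax
    refine ⟨f, hf1, fun v => ?_⟩
    have einj : ∀ p q : ι, e p = e q → p = q := by
      intro p q hpq
      by_contra hne'
      obtain ⟨a, ha, bb, hb, hab⟩ := Finset.one_lt_card.mp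
        (show 1 < (e p).card by have := hcard p; omega)
      exact hab (hlin p q hne' a bb ha (hpq ▸ ha) hb (hpq ▸ hb))
    have hT : {w : V | g w ≤ g v}.Finite :=
      Set.Finite.preimage hg.injOn (Set.finite_Iic (g v))
    have hS : {s : Finset V | s ⊆ hT.toFinset}.Finite := by
      apply Set.Finite.subset (hT.toFinset.powerset).finite_toSet
      intro s hs
      simpa [Finset.mem_powerset] using hs
    apply Set.Finite.subset (Set.Finite.preimage (f := e) (fun p _ q _ h => einj p q h) hS)
    intro p hp
    simp only [Set.mem_preimage, Set.mem_setOf_eq] at *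
    intro w hw
    simp only [Set.Finite.mem_toFinset, Set.mem_setOf_eq]
    exact hp ▸ hf2 p w hw
  | succ t IH =>
    intro V ι e hV hcard hlin
    classical
  set c : Cardinal := Cardinal.aleph (t+1 : ℕ) with hc
  have hsucc : c = Order.succ (Cardinal.aleph t) := by
    rw [hc]
    rw [show (((t:ℕ)+1 : ℕ) : Ordinal) = Order.succ (t : Ordinal) by
      push_cast; exact Ordinal.add_one_eq_succ _]
    exact Cardinal.aleph_succ _
  set W := c.ord.ToType with hW
  have hVW : #V ≤ #W := by rw [hW, Cardinal.mk_toType, Cardinal.card_ord]; exact hV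
  obtain ⟨g⟩ : Nonempty (V ↪ W) := Cardinal.le_def _ _ |>.mp hVW
  -- initial segments are small
  have hsmall : ∀ x : W, #({v : V | g v ≤ x}) ≤ Cardinal.aleph t := by
    intro x
    have h1 : #({v : V | g v ≤ x}) ≤ #(Set.Iic x) :=
      Cardinal.mk_le_of_injective (f := fun v => (⟨g v.1, v.2⟩ : Set.Iic x))
        (fun a b hab => Subtype.ext (g.injective (congrArg Subtype.val hab)))
    have h2 : #(Set.Iic x) ≤ #(Set.Iio x) + 1 := by
      rw [← Set.Iio_insert]; exact Cardinal.mk_insert_le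
    have h3 : #(Set.Iio x) < c := Cardinal.mk_Iio_ord_toType x
    have h4 : #(Set.Iio x) ≤ Cardinal.aleph t :=
      Order.lt_succ_iff.mp (lt_of_lt_of_eq h3 hsucc)
    calc #({v : V | g v ≤ x}) ≤ #(Set.Iio x) + 1 := h1.trans h2
      _ ≤ Cardinal.aleph t + 1 := by gcongr
      _ = Cardinal.aleph t := Cardinal.add_one_eq (Cardinal.aleph0_le_aleph _)
  -- edge completion
  have hlinU : ∀ (v w : V), v ≠ w → ∀ p q : ι, v ∈ e p → w ∈ e p → v ∈ e q → w ∈ e q → p = q := by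
    intro v w hvw p q hvp hwp hvq hwq
    by_contra hpq
    exact hvw (hlin p q hpq v w hvp hvq hwp hwq)
  set inr : V → V → Set V := fun v w => ⋃ (p : ι) (_ : v ∈ e p ∧ w ∈ e p ∧ v ≠ w), ↑(e p)
    with hinr
  have hinr_fin : ∀ v w, (inr v w).Finite := by
    intro v w
    by_cases hex : ∃ p : ι, v ∈ e p ∧ w ∈ e p ∧ v ≠ w
    · obtain ⟨p₀, h₀⟩ := hex
      apply Set.Finite.subset (e p₀).finite_toSet
      intro x hx
      simp only [hinr, Set.mem_iUnion] at hx
      obtain ⟨p, hp, hx⟩ := hx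
      rwa [hlinU v w hp.2.2 p p₀ hp.1 hp.2.1 h₀.1 h₀.2.1] at hx
    · have : inr v w = ∅ := by
        ext x
        simp only [hinr, Set.mem_iUnion, Set.mem_empty_iff_false, iff_false, not_exists]
        intro p hp
        exact absurd ⟨p, hp⟩ hex
      rw [this]; exact Set.finite_empty
  have hinr_sub : ∀ v w (p : ι), v ∈ e p → w ∈ e p → v ≠ w → ↑(e p) ⊆ inr v w := by
    intro v w p hv hw hvw x hx
    simp only [hinr, Set.mem_iUnion]
    exact ⟨p, ⟨hv, hw, hvw⟩, hx⟩
  set F : Set V → Set V := fun S => S ∪ ⋃ (vw : ↥S × ↥S), inr vw.1.1 vw.2.1 with hFdef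
  have hFsub : ∀ S : Set V, S ⊆ F S := fun S => Set.subset_union_left
  have hFmono : ∀ S T : Set V, S ⊆ T → F S ⊆ F T := by
    intro S T hST x hx
    rcases hx with hx | hx
    · exact Or.inl (hST hx)
    · simp only [Set.mem_iUnion] at hx
      obtain ⟨vw, hx⟩ := hx
      refine Or.inr ?_
      simp only [Set.mem_iUnion]
      exact ⟨(⟨vw.1.1, hST vw.1.2⟩, ⟨vw.2.1, hST vw.2.2⟩), hx⟩
  have hFcard : ∀ S : Set V, #S ≤ Cardinal.aleph t → #(F S) ≤ Cardinal.aleph t := by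
    intro S hS
    have h1 : #(⋃ (vw : ↥S × ↥S), inr vw.1.1 vw.2.1) ≤ #(↥S × ↥S) * ℵ₀ := by
      refine Cardinal.mk_iUnion_le_sum_mk.trans ?_
      refine (Cardinal.sum_le_sum _ (fun _ => ℵ₀) ?_).trans ?_
      · intro vw
        exact (Set.Finite.lt_aleph0 (hinr_fin _ _)).le
      · rw [Cardinal.sum_const']
    have h2 : #(↥S × ↥S) ≤ Cardinal.aleph t := by
      rw [Cardinal.mk_prod]; simp only [Cardinal.lift_id]
      calc #S * #S ≤ Cardinal.aleph t * Cardinal.aleph t := mul_le_mul' hS hS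
        _ = Cardinal.aleph t := Cardinal.mul_eq_self (Cardinal.aleph0_le_aleph _)
    calc #(F S) ≤ #S + #(⋃ (vw : ↥S × ↥S), inr vw.1.1 vw.2.1) := Cardinal.mk_union_le _ _
      _ ≤ Cardinal.aleph t + Cardinal.aleph t * ℵ₀ := by
          refine add_le_add hS (h1.trans ?_)
          exact mul_le_mul' h2 le_rfl
      _ ≤ Cardinal.aleph t + Cardinal.aleph t * Cardinal.aleph t := by
          gcongr
          exact (Cardinal.aleph0_le_aleph _)
      _ = Cardinal.aleph t := by
          rw [Cardinal.mul_eq_self (Cardinal.aleph0_le_aleph _),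
            Cardinal.add_eq_self (Cardinal.aleph0_le_aleph _)]
  set cl : Set V → Set V := fun S => ⋃ n : ℕ, F^[n] S with hcldef
  have hiter_mono : ∀ (S : Set V) (n : ℕ), F^[n] S ⊆ F^[n+1] S := by
    intro S n
    rw [Function.iterate_succ_apply']
    exact hFsub _
  have hiter_le : ∀ (S : Set V) (n m : ℕ), n ≤ m → F^[n] S ⊆ F^[m] S := by
    intro S n m hnm
    induction m with
    | zero => rw [Nat.le_zero.mp hnm]
    | succ m ihm =>
      rcases Nat.lt_or_ge n (m+1) with hlt | hge
      · exact (ihm (by omega)).trans (hiter_mono S m)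
      · rw [le_antisymm hnm hge]
  have hclsub : ∀ S : Set V, S ⊆ cl S := fun S =>
    Set.subset_iUnion (fun n : ℕ => F^[n] S) 0
  have hclcard : ∀ S : Set V, #S ≤ Cardinal.aleph t → #(cl S) ≤ Cardinal.aleph t := by
    intro S hS
    have hn : ∀ n : ℕ, #(F^[n] S) ≤ Cardinal.aleph t := by
      intro n
      induction n with
      | zero => exact hS
      | succ n ihn => rw [Function.iterate_succ_apply']; exact hFcard _ ihn
    calc #(cl S) ≤ Cardinal.sum (fun n : ℕ => #(F^[n] S)) := Cardinal.mk_iUnion_le_sum_mk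
      _ ≤ Cardinal.sum (fun _ : ℕ => Cardinal.aleph t) := Cardinal.sum_le_sum _ _ hn
      _ = #ℕ * Cardinal.aleph t := Cardinal.sum_const' _ _
      _ ≤ Cardinal.aleph t * Cardinal.aleph t := by
          gcongr
          · simpa using (Cardinal.aleph0_le_aleph (t : Ordinal))
      _ = Cardinal.aleph t := Cardinal.mul_eq_self (Cardinal.aleph0_le_aleph _)
  have hclmono : ∀ S T : Set V, S ⊆ T → cl S ⊆ cl T := by
    intro S T hST
    have : ∀ n : ℕ, F^[n] S ⊆ F^[n] T := by
      intro n
      induction n with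
      | zero => exact hST
      | succ n ihn =>
        rw [Function.iterate_succ_apply', Function.iterate_succ_apply']
        exact hFmono _ _ ihn
    exact Set.iUnion_mono fun n => this n
  have hclosed : ∀ (S : Set V) (v w : V) (p : ι), v ∈ cl S → w ∈ cl S → v ≠ w →
      v ∈ e p → w ∈ e p → ↑(e p) ⊆ cl S := by
    intro S v w p hv hw hvw hvp hwp
    simp only [hcldef, Set.mem_iUnion] at hv hw
    obtain ⟨n, hn⟩ := hv
    obtain ⟨m, hm⟩ := hw
    have hv' : v ∈ F^[max n m] S := hiter_le S n _ (le_max_left n m) hn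
    have hw' : w ∈ F^[max n m] S := hiter_le S m _ (le_max_right n m) hm
    have : ↑(e p) ⊆ F^[max n m + 1] S := by
      rw [Function.iterate_succ_apply']
      intro x hx
      refine Or.inr ?_
      simp only [Set.mem_iUnion]
      exact ⟨(⟨v, hv'⟩, ⟨w, hw'⟩), hinr_sub v w p hvp hwp hvw hx⟩
    exact this.trans (Set.subset_iUnion (fun n : ℕ => F^[n] S) (max n m + 1))
  -- the chain of closed sets
  set VX : W → Set V := fun x => cl {v | g v ≤ x} with hVXdef
  have hVXmono : ∀ x y : W, x ≤ y → VX x ⊆ VX y := by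
    intro x y hxy
    exact hclmono _ _ (fun v hv => le_trans hv hxy)
  have hVXcard : ∀ x : W, #(VX x) ≤ Cardinal.aleph t := fun x => hclcard _ (hsmall x)
  have hVXself : ∀ v : V, v ∈ VX (g v) := fun v => hclsub _ (le_refl (g v))
  -- stage of a vertex
  have hwf : WellFounded ((· < ·) : W → W → Prop) := IsWellFounded.wf
  have hstageSet_ne : ∀ v : V, {x : W | v ∈ VX x}.Nonempty := fun v => ⟨g v, hVXself v⟩
  set stage : V → W := fun v => hwf.min {x : W | v ∈ VX x} (hstageSet_ne v) with hstagedef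
  have hstage_mem : ∀ v : V, v ∈ VX (stage v) := fun v =>
    hwf.min_mem {x : W | v ∈ VX x} (hstageSet_ne v)
  have hstage_le : ∀ (v : V) (x : W), v ∈ VX x → stage v ≤ x := by
    intro v x hx
    exact not_lt.mp (hwf.not_lt_min {x : W | v ∈ VX x} hx)
  have hmem_stage : ∀ (v : V) (x : W), v ∈ VX x ↔ stage v ≤ x := by
    intro v x
    exact ⟨hstage_le v x, fun h => hVXmono _ _ h (hstage_mem v)⟩
  -- birth stage of an edge
  have hne : ∀ p : ι, ((e p).image stage).Nonempty := by
    intro p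
    apply Finset.image_nonempty.mpr
    exact Finset.card_pos.mp (by have := hcard p; omega)
  set b : ι → W := fun p => ((e p).image stage).max' (hne p) with hbdef
  have hb_le : ∀ (p : ι) (v : V), v ∈ e p → stage v ≤ b p := by
    intro p v hv
    exact Finset.le_max' _ _ (Finset.mem_image_of_mem stage hv)
  have hb_mem : ∀ p : ι, ∃ v ∈ e p, stage v = b p := by
    intro p
    have := Finset.max'_mem _ (hne p)
    rwa [Finset.mem_image] at this
  -- at most one old vertex in each edge
  have hold : ∀ p : ι, ((e p).filter (fun v => ¬ stage v = b p)).card ≤ 1 := by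
    intro p
    by_contra hcon
    obtain ⟨v, hv, w, hw, hvw⟩ := Finset.one_lt_card.mp
      (show 1 < ((e p).filter (fun v => ¬ stage v = b p)).card by omega)
    rw [Finset.mem_filter] at hv hw
    have hvlt : stage v < b p := lt_of_le_of_ne (hb_le p v hv.1) hv.2
    have hwlt : stage w < b p := lt_of_le_of_ne (hb_le p w hw.1) hw.2
    have hvz : v ∈ VX (max (stage v) (stage w)) :=
      (hmem_stage v _).mpr (le_max_left _ _)
    have hwz : w ∈ VX (max (stage v) (stage w)) :=
      (hmem_stage w _).mpr (le_max_right _ _)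
    have hsubVX : ↑(e p) ⊆ VX (max (stage v) (stage w)) :=
      hclosed _ v w p hvz hwz hvw hv.1 hw.1
    obtain ⟨u, hu, hub⟩ := hb_mem p
    have : stage u ≤ max (stage v) (stage w) := (hmem_stage u _).mp (hsubVX hu)
    rw [hub] at this
    exact absurd this (not_le.mpr (max_lt hvlt hwlt))
  have hnewcard : ∀ p : ι, t + 2 ≤ ((e p).filter (fun v => stage v = b p)).card := by
    intro p
    have h1 := Finset.card_filter_add_card_filter_not
      (s := e p) (p := fun v => stage v = b p)
    have h2 := hold p
    have h3 := hcard p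
    omega
  -- sub-instances
  have hsub : ∀ δ : W, ∃ fδ : {p : ι // b p = δ} → {v : V // stage v = δ},
      (∀ q, (fδ q).1 ∈ e q.1) ∧ ∀ w, {q | fδ q = w}.Finite := by
    intro δ
    have hVδ : #({v : V // stage v = δ}) ≤ Cardinal.aleph t := by
      have hss : {v : V | stage v = δ} ⊆ VX δ := by
        intro v hv
        rw [Set.mem_setOf_eq] at hv
        rw [← hv]
        exact hstage_mem v
      exact (Cardinal.mk_le_mk_of_subset hss).trans (hVXcard δ)
    obtain ⟨fδ, h1, h2⟩ := IH
      (fun q : {p : ι // b p = δ} => (e q.1).subtype (fun v => stage v = δ))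
      hVδ
      (by
        intro q
        rw [Finset.card_subtype]
        have := hnewcard q.1
        rw [q.2] at this
        exact this)
      (by
        intro q q' hqq' v w hv1 hv2 hw1 hw2
        rw [Finset.mem_subtype] at hv1 hv2 hw1 hw2
        have hq : q.1 ≠ q'.1 := fun h => hqq' (Subtype.ext h)
        exact Subtype.ext (hlin q.1 q'.1 hq v.1 w.1 hv1 hv2 hw1 hw2))
    refine ⟨fδ, fun q => ?_, h2⟩
    have := h1 q
    rwa [Finset.mem_subtype] at this
  choose F' hF1 hF2 using hsub
  refine ⟨fun p => (F' (b p) ⟨p, rfl⟩).1, fun p => hF1 (b p) ⟨p, rfl⟩, ?_⟩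
  intro v
  have key : ∀ (p : ι) (δ : W) (hδ : b p = δ),
      (F' δ ⟨p, hδ⟩).1 = (F' (b p) ⟨p, rfl⟩).1 := by
    intro p δ hδ
    subst hδ
    rfl
  have himg : {p : ι | (F' (b p) ⟨p, rfl⟩).1 = v} ⊆
      Subtype.val '' {q : {p : ι // b p = stage v} | F' (stage v) q = ⟨v, rfl⟩} := by
    intro p hp
    rw [Set.mem_setOf_eq] at hp
    have hbp : b p = stage v := by
      rw [← hp]
      exact ((F' (b p) ⟨p, rfl⟩).2).symm
    refine ⟨⟨p, hbp⟩, ?_, rfl⟩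
    rw [Set.mem_setOf_eq]
    apply Subtype.ext
    rw [key p (stage v) hbp]
    exact hp
  exact (Set.Finite.image _ (hF2 (stage v) ⟨v, rfl⟩)).subset himg


end KomjathCloud

/-- If the continuum is at most `ℵ_n`, then the plane is the union of `n + 2` clouds
around `n + 2` points in general position (no three collinear). -/
theorem plane_union_clouds_of_continuum_le (n : ℕ)
    (h : (2 : Cardinal) ^ Cardinal.aleph0 ≤ Cardinal.aleph n) :
    ∃ (a : Fin (n + 2) → ℝ × ℝ) (A : Fin (n + 2) → Set (ℝ × ℝ)),
      (∀ i j k : Fin (n + 2), i ≠ j → j ≠ k → i ≠ k →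
        ¬ Collinear ℝ ({a i, a j, a k} : Set (ℝ × ℝ))) ∧
      (∀ k, IsCloud (a k) (A k)) ∧ (⋃ k, A k) = Set.univ := by
  classical
  have h0 : (2 : Cardinal.{0}) ^ Cardinal.aleph0 ≤ Cardinal.aleph n := by
    rw [← Cardinal.lift_le, Cardinal.lift_power, Cardinal.lift_two, Cardinal.lift_aleph0,
      Cardinal.lift_aleph, Ordinal.lift_natCast]
    exact h
  clear h
  obtain _ | N := n
  · exfalso
    rw [Nat.cast_zero, Cardinal.aleph_zero] at h0
    exact absurd h0 (not_le.mpr (Cardinal.cantor Cardinal.aleph0))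
  -- main case : n = N + 1, so n + 2 = N + 3 marked points
  set a : Fin (N + 3) → ℝ × ℝ := KomjathCloud.pts (N + 3) with ha
  have hGP : ∀ i j k : Fin (N + 3), i ≠ j → j ≠ k → i ≠ k →
      KomjathCloud.cross (a j - a i) (a k - a i) ≠ 0 := fun i j k hij hjk hik =>
    KomjathCloud.gp _ i j k hij hjk hik
  -- distinguished indices
  have hz01 : (⟨0, by omega⟩ : Fin (N + 3)) ≠ ⟨1, by omega⟩ := by
    intro hh; exact absurd (congrArg Fin.val hh) (by simp)
  have hz02 : (⟨0, by omega⟩ : Fin (N + 3)) ≠ ⟨2, by omega⟩ := by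
    intro hh; exact absurd (congrArg Fin.val hh) (by simp)
  have hz12 : (⟨1, by omega⟩ : Fin (N + 3)) ≠ ⟨2, by omega⟩ := by
    intro hh; exact absurd (congrArg Fin.val hh) (by simp)
  -- regular points
  set Reg : Set (ℝ × ℝ) := {p | ∀ i j : Fin (N + 3), i ≠ j →
      KomjathCloud.cross (a j - a i) (p - a i) ≠ 0} with hRegdef
  have hRegNe : ∀ p ∈ Reg, ∀ i : Fin (N + 3), p ≠ a i := by
    intro p hp i hpa
    have hij : i ≠ (if i = ⟨0, by omega⟩ then (⟨1, by omega⟩ : Fin (N + 3)) else ⟨0, by omega⟩) := by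
      split_ifs with hh
      · rw [hh]; exact hz01
      · exact hh
    refine hp i _ hij ?_
    rw [hpa, sub_self]
    simp [KomjathCloud.cross]
  -- the edge system
  set e : ↥Reg → Finset (Fin (N + 3) × Option ℝ) := fun p =>
    Finset.univ.image (fun i => (i, KomjathCloud.code (a i) p.1)) with he
  have hecard : ∀ p, (e p).card = N + 3 := by
    intro p
    rw [he, Finset.card_image_of_injective _ (fun i j hij => (Prod.ext_iff.mp hij).1),
      Finset.card_univ, Fintype.card_fin]
  have hmem_e : ∀ (p : ↥Reg) (u : Fin (N + 3) × Option ℝ),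
      u ∈ e p ↔ ∃ i, (i, KomjathCloud.code (a i) p.1) = u := by
    intro p u
    rw [he]
    simp [Finset.mem_image]
  have hlin : ∀ p q : ↥Reg, p ≠ q → ∀ v w, v ∈ e p → v ∈ e q → w ∈ e p → w ∈ e q → v = w := by
    intro p q hpq v w hvp hvq hwp hwq
    by_contra hvw
    rw [hmem_e] at hvp hvq hwp hwq
    obtain ⟨i, hi⟩ := hvp
    obtain ⟨i2, hi2⟩ := hvq
    obtain ⟨j, hj⟩ := hwp
    obtain ⟨j2, hj2⟩ := hwq
    have hii : i2 = i := by
      have := hi2.trans hi.symm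
      exact (Prod.ext_iff.mp this).1
    rw [hii] at hi2
    have hcv : KomjathCloud.code (a i) p.1 = KomjathCloud.code (a i) q.1 := by
      have := hi.trans hi2.symm
      exact (Prod.ext_iff.mp this).2
    have hjj : j2 = j := by
      have := hj2.trans hj.symm
      exact (Prod.ext_iff.mp this).1
    rw [hjj] at hj2
    have hcw : KomjathCloud.code (a j) p.1 = KomjathCloud.code (a j) q.1 := by
      have := hj.trans hj2.symm
      exact (Prod.ext_iff.mp this).2
    have hij : i ≠ j := by
      intro hh
      subst hh
      exact hvw (hi.symm.trans hj)
    have hd : q.1 - p.1 ≠ 0 := by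
      rw [sub_ne_zero]
      intro hh
      exact hpq (Subtype.ext hh.symm)
    have c1 : KomjathCloud.cross (q.1 - p.1) (a i - p.1) = 0 := by
      rw [← KomjathCloud.cross_swap_base]
      exact KomjathCloud.code_eq_cross hcv
    have c2 : KomjathCloud.cross (q.1 - p.1) (a j - p.1) = 0 := by
      rw [← KomjathCloud.cross_swap_base]
      exact KomjathCloud.code_eq_cross hcw
    have c3 : KomjathCloud.cross (a i - p.1) (a j - p.1) = 0 := KomjathCloud.cross_cancel hd c1 c2
    rw [KomjathCloud.cross_swap_base] at c3
    exact p.2 i j hij c3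
  -- cardinality of the vertex set
  have hV : Cardinal.mk (Fin (N + 3) × Option ℝ) ≤ Cardinal.aleph ((N : ℕ) + 1 : ℕ) := by
    have h1 : Cardinal.mk (Fin (N + 3) × Option ℝ) = ((N + 3 : ℕ) : Cardinal) * (Cardinal.continuum + 1) := by
      rw [Cardinal.mk_prod, Cardinal.mk_option, Cardinal.mk_fin, Cardinal.mk_real]
      simp
    rw [h1, Cardinal.add_one_eq Cardinal.aleph0_le_continuum,
      Cardinal.mul_eq_right Cardinal.aleph0_le_continuum
        ((Cardinal.nat_lt_aleph0 _).le.trans Cardinal.aleph0_le_continuum)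
        (Nat.cast_ne_zero.mpr (by omega)), ← Cardinal.two_power_aleph0]
    exact h0
  obtain ⟨f, hfmem, hfib⟩ := KomjathCloud.cloud_orient (N + 1) e hV
    (by intro p; rw [hecard]; try omega) hlin
  -- choice of a special line for non-regular points
  have hspec : ∀ p : ℝ × ℝ, p ∉ Reg → ∃ ij : Fin (N + 3) × Fin (N + 3),
      ij.1 ≠ ij.2 ∧ KomjathCloud.cross (a ij.2 - a ij.1) (p - a ij.1) = 0 := by
    intro p hp
    rw [hRegdef, Set.mem_setOf_eq] at hp
    push_neg at hp
    obtain ⟨i, j, hij, hc⟩ := hp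
    exact ⟨(i, j), hij, hc⟩
  choose pair hpair1 hpair2 using hspec
  -- a color avoiding two given indices
  set third : Fin (N + 3) → Fin (N + 3) → Fin (N + 3) := fun i j =>
    if i ≠ ⟨0, by omega⟩ ∧ j ≠ ⟨0, by omega⟩ then ⟨0, by omega⟩
    else if i ≠ ⟨1, by omega⟩ ∧ j ≠ ⟨1, by omega⟩ then ⟨1, by omega⟩
    else ⟨2, by omega⟩ with hthirddef
  have hthird : ∀ i j : Fin (N + 3), i ≠ j → third i j ≠ i ∧ third i j ≠ j := by
    intro i j hij
    rw [hthirddef]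
    simp only
    split_ifs with h1 h2
    · exact ⟨Ne.symm h1.1, Ne.symm h1.2⟩
    · exact ⟨Ne.symm h2.1, Ne.symm h2.2⟩
    · push_neg at h1 h2
      rcases eq_or_ne i ⟨0, by omega⟩ with hi0 | hi0
      · have hj1 : j = ⟨1, by omega⟩ := by
          rcases eq_or_ne i ⟨1, by omega⟩ with hi1 | hi1
          · rw [hi0] at hi1; exact absurd hi1 hz01
          · exact h2 hi1
        rw [hi0, hj1]
        exact ⟨Ne.symm hz02, Ne.symm hz12⟩
      · have hj0 : j = ⟨0, by omega⟩ := h1 hi0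
        have hi1 : i = ⟨1, by omega⟩ := by
          rcases eq_or_ne i ⟨1, by omega⟩ with hi1 | hi1
          · exact hi1
          · have := h2 hi1
            rw [hj0] at this
            exact absurd this hz01
        rw [hi1, hj0]
        exact ⟨Ne.symm hz12, Ne.symm hz02⟩
  -- the coloring
  set χ : ℝ × ℝ → Fin (N + 3) := fun p =>
    if hp : p ∈ Reg then (f ⟨p, hp⟩).1 else third (pair p hp).1 (pair p hp).2 with hχ
  refine ⟨a, fun i => {p | χ p = i}, ?_, ?_, ?_⟩
  · -- general position
    intro i j k hij hjk hik hcol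
    rw [collinear_iff_of_mem (Set.mem_insert (a i) _)] at hcol
    obtain ⟨w, hw⟩ := hcol
    obtain ⟨r2, hr2⟩ := hw (a j) (by simp)
    obtain ⟨r3, hr3⟩ := hw (a k) (by simp)
    apply hGP i j k hij hjk hik
    have h2 : a j - a i = r2 • w := by rw [hr2]; simp [vadd_eq_add]
    have h3 : a k - a i = r3 • w := by rw [hr3]; simp [vadd_eq_add]
    rw [h2, h3]
    simp only [KomjathCloud.cross, Prod.smul_fst, Prod.smul_snd, smul_eq_mul]
    ring
  · -- cloud property
    intro i v hv
    have finA : (Subtype.val '' {q : ↥Reg | f q = (i, KomjathCloud.vcode v)}).Finite :=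
      Set.Finite.image _ (hfib (i, KomjathCloud.vcode v))
    set S : Fin (N + 3) × Fin (N + 3) → Set (ℝ × ℝ) := fun jk =>
      {p : ℝ × ℝ | (∃ t : ℝ, p = a i + t • v) ∧ jk.1 ≠ jk.2 ∧
        KomjathCloud.cross (a jk.2 - a jk.1) (p - a jk.1) = 0 ∧ i ≠ jk.1 ∧ i ≠ jk.2} with hSdef
    have hSsub : ∀ jk, (S jk).Subsingleton := by
      intro jk p hp q hq
      rw [hSdef, Set.mem_setOf_eq] at hp hq
      obtain ⟨⟨t₁, hpt⟩, hne, hc1, hi1, hi2⟩ := hp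
      obtain ⟨⟨t₂, hqt⟩, -, hc2, -, -⟩ := hq
      have hBA : KomjathCloud.cross (a jk.2 - a jk.1) (a i - a jk.1) ≠ 0 :=
        hGP jk.1 jk.2 i hne (Ne.symm hi2) (Ne.symm hi1)
      have := KomjathCloud.line_unique hBA t₁ t₂ (by rw [← hpt]; exact hc1)
        (by rw [← hqt]; exact hc2)
      rw [hpt, hqt, this]
    have finB : (⋃ jk, S jk).Finite :=
      Set.finite_iUnion (fun jk => (hSsub jk).finite)
    apply Set.Finite.subset (finA.union finB)
    rintro p ⟨hχp, hpL⟩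
    rw [Set.mem_setOf_eq] at hχp
    obtain ⟨t, hpt⟩ := hpL
    by_cases hp : p ∈ Reg
    · left
      simp only [hχ] at hχp
      rw [dif_pos hp] at hχp
      refine ⟨⟨p, hp⟩, ?_, rfl⟩
      rw [Set.mem_setOf_eq]
      have hfm := hfmem ⟨p, hp⟩
      rw [hmem_e] at hfm
      obtain ⟨i0, hi0⟩ := hfm
      have hi0i : i0 = i := by
        rw [← hχp, ← hi0]
      have hcode : KomjathCloud.code (a i) p = KomjathCloud.vcode v :=
        KomjathCloud.code_line t hpt (hRegNe p hp i)
      rw [← hi0, hi0i, hcode]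
    · right
      simp only [hχ] at hχp
      rw [dif_neg hp] at hχp
      refine Set.mem_iUnion.mpr ⟨pair p hp, ?_⟩
      rw [hSdef, Set.mem_setOf_eq]
      have h3 := hthird (pair p hp).1 (pair p hp).2 (hpair1 p hp)
      rw [hχp] at h3
      exact ⟨⟨t, hpt⟩, hpair1 p hp, hpair2 p hp, h3.1, h3.2⟩
  · -- covering
    ext p
    simp only [Set.mem_iUnion, Set.mem_setOf_eq, Set.mem_univ, iff_true]
    exact ⟨χ p, rfl⟩
end

section
/- Suppose G = (V, E) is a graph, μ is an ordinal, and {A_ξ : ξ < μ} is a cover of V such that each induced subgraph G[A_ξ] has countable chromatic number, and such that for every ξ < μ and every x ∈ A_ξ \ ⋃_{ζ<ξ} A_ζ, the set N_G(x) ∩ ⋃_{ζ<ξ} A_ζ is finite. Then G has countable chromatic number (there is a proper coloring of G with countably many colors). -/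
/-- If a graph `G` is covered by an ordinal-indexed family `{A ξ : ξ < μ}` of sets,
each of countable chromatic number, such that every vertex appearing first in `A ξ`
has only finitely many neighbors among the earlier sets, then `G` has countable
chromatic number. -/
theorem countably_chromatic_of_good_ordering {V : Type*} (G : SimpleGraph V)
    (μ : Ordinal) (A : Ordinal → Set V)
    (hcover : ⋃ ξ ∈ Set.Iio μ, A ξ = Set.univ)
    (hcc : ∀ ξ < μ, Nonempty ((G.induce (A ξ)).Coloring ℕ))
    (hfin : ∀ ξ < μ, ∀ x ∈ A ξ \ ⋃ ζ ∈ Set.Iio ξ, A ζ,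
      (G.neighborSet x ∩ ⋃ ζ ∈ Set.Iio ξ, A ζ).Finite) :
    Nonempty (G.Coloring ℕ) := by
  classical
  -- first index where a vertex appears
  have hSne : ∀ v : V, {ξ : Ordinal | ξ < μ ∧ v ∈ A ξ}.Nonempty := by
    intro v
    have : v ∈ ⋃ ξ ∈ Set.Iio μ, A ξ := by rw [hcover]; trivial
    obtain ⟨ξ, hξ, hv⟩ : ∃ i < μ, v ∈ A i := by simpa [Set.mem_iUnion] using this
    exact ⟨ξ, hξ, hv⟩
  set ξf : V → Ordinal := fun v => sInf {ξ : Ordinal | ξ < μ ∧ v ∈ A ξ} with hξf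
  have hmem : ∀ v, ξf v < μ ∧ v ∈ A (ξf v) := fun v => csInf_mem (hSne v)
  have hmin : ∀ v ζ, ζ < μ → v ∈ A ζ → ξf v ≤ ζ := fun v ζ h1 h2 =>
    csInf_le' ⟨h1, h2⟩
  have hnotearlier : ∀ v : V, v ∉ ⋃ ζ ∈ Set.Iio (ξf v), A ζ := by
    intro v hv
    simp only [Set.mem_iUnion, Set.mem_Iio] at hv
    obtain ⟨ζ, hζ, hvζ⟩ := hv
    exact absurd (hmin v ζ (hζ.trans (hmem v).1) hvζ) (not_le.mpr hζ)
  -- finiteness of back-neighborhoods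
  have hF : ∀ v : V, {w | G.Adj v w ∧ ξf w < ξf v}.Finite := by
    intro v
    have h := hfin (ξf v) (hmem v).1 v ⟨(hmem v).2, hnotearlier v⟩
    refine h.subset ?_
    rintro w ⟨hadj, hlt⟩
    refine ⟨hadj, ?_⟩
    simp only [Set.mem_iUnion, Set.mem_Iio]
    exact ⟨ξf w, hlt, (hmem w).2⟩
  -- well-founded relation refining ξf
  have hwf : WellFounded (fun x y : V =>
      Prod.Lex (· < ·) WellOrderingRel (ξf x, x) (ξf y, y)) :=
    InvImage.wf (fun v => (ξf v, v))
      (WellFounded.prod_lex Ordinal.lt_wf IsWellFounded.wf)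
  -- greedy coloring for cross edges
  let g : V → ℕ := hwf.fix (fun v ih =>
    sInf {n : ℕ | ∀ w, G.Adj v w → ∀ h : ξf w < ξf v,
      ih w (Prod.Lex.left _ _ h) ≠ n})
  have hgeq : ∀ v, g v =
      sInf {n : ℕ | ∀ w, G.Adj v w → ∀ _ : ξf w < ξf v, g w ≠ n} := by
    intro v
    show hwf.fix _ v = _
    rw [WellFounded.fix_eq]
  have hgood : ∀ v, g v ∈ {n : ℕ | ∀ w, G.Adj v w → ∀ _ : ξf w < ξf v, g w ≠ n} := by
    intro v
    rw [hgeq v]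
    apply Nat.sInf_mem
    -- the allowed set is nonempty since forbidden values are finite
    have hfim : (g '' {w | G.Adj v w ∧ ξf w < ξf v}).Finite := (hF v).image g
    obtain ⟨n, hn⟩ := hfim.infinite_compl.nonempty
    exact ⟨n, fun w hadj hlt hne => hn (hne ▸ Set.mem_image_of_mem g ⟨hadj, hlt⟩)⟩
  -- colorings of the pieces
  have col : ∀ ξ, ξ < μ → (G.induce (A ξ)).Coloring ℕ := fun ξ h => (hcc ξ h).some
  refine ⟨SimpleGraph.Coloring.mk
    (fun v => Nat.pair (col (ξf v) (hmem v).1 ⟨v, (hmem v).2⟩) (g v)) ?_⟩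
  intro v w hadj hEq
  rw [Nat.pair_eq_pair] at hEq
  rcases lt_trichotomy (ξf v) (ξf w) with hlt | heq | hlt
  · exact hgood w v hadj.symm hlt hEq.2
  · -- same piece: use the piece coloring
    have hwmem : w ∈ A (ξf v) := heq ▸ (hmem w).2
    have := (col (ξf v) (hmem v).1).valid
      (show (G.induce (A (ξf v))).Adj ⟨v, (hmem v).2⟩ ⟨w, hwmem⟩ from hadj)
    apply this
    have colcongr : ∀ {ξ ζ : Ordinal}, ξ = ζ → ∀ (hξ : ξ < μ) (hζ : ζ < μ)
        (u : V) (huξ : u ∈ A ξ) (huζ : u ∈ A ζ),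
        col ξ hξ ⟨u, huξ⟩ = col ζ hζ ⟨u, huζ⟩ := by
      rintro ξ ζ rfl hξ hζ u huξ huζ
      rfl
    have h2 : col (ξf w) (hmem w).1 ⟨w, (hmem w).2⟩
        = col (ξf v) (hmem v).1 ⟨w, hwmem⟩ :=
      colcongr heq.symm _ _ _ _ _
    rw [h2] at hEq
    exact hEq.1
  · exact hgood v w hadj hlt hEq.2.symm
end

section
/- Let G be a graph, n ≥ 1 a natural number, and let A, A' be two distinct maximal n-connected sets of vertices of G. Then |A ∩ A'| < n. -/
/-- A set `A` of vertices spans an `n`-connected subgraph of `G` iff for every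
`F ⊆ A` with `|F| < n`, the subgraph of `G` induced on `A \ F` is connected. -/
def SpansNConnected {V : Type*} (G : SimpleGraph V) (n : ℕ) (A : Set V) : Prop :=
  ∀ F : Finset V, ↑F ⊆ A → F.card < n → (G.induce (A \ ↑F)).Connected

/-- `A` is a maximal `n`-connected set iff it spans an `n`-connected subgraph and no
proper superset of it does. -/
def MaximalNConnected {V : Type*} (G : SimpleGraph V) (n : ℕ) (A : Set V) : Prop :=
  SpansNConnected G n A ∧ ∀ B : Set V, A ⊆ B → SpansNConnected G n B → B = A

/-- Two distinct maximal `n`-connected sets meet in fewer than `n` vertices. -/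
theorem maximal_nconnected_inter_lt {V : Type*} (G : SimpleGraph V) (n : ℕ) (hn : 1 ≤ n)
    (A A' : Set V) (hA : MaximalNConnected G n A) (hA' : MaximalNConnected G n A')
    (hne : A ≠ A') :
    Cardinal.mk ↥(A ∩ A') < (n : Cardinal) := by
  classical
  by_contra h
  push_neg at h
  have hspan : SpansNConnected G n (A ∪ A') := by
    intro F hF hFcard
    -- pick x ∈ (A ∩ A') \ F
    have hx : ∃ x, x ∈ (A ∩ A') \ (↑F : Set V) := by
      by_contra hc
      push_neg at hc
      have hsub : A ∩ A' ⊆ (↑F : Set V) := by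
        intro x hxAA
        by_contra hxF
        exact hc x ⟨hxAA, hxF⟩
      have hle := Cardinal.mk_le_mk_of_subset hsub
      simp only [Finset.coe_sort_coe, Cardinal.mk_coe_finset] at hle
      have : (n : Cardinal) < (n : Cardinal) :=
        lt_of_le_of_lt (h.trans hle) (by exact_mod_cast hFcard)
      exact lt_irrefl _ this
    obtain ⟨x, hxAA, hxF⟩ := hx
    set FA := F.filter (· ∈ A) with hFA
    set FA' := F.filter (· ∈ A') with hFA'
    have hAconn : (G.induce (A \ ↑FA)).Connected :=
      hA.1 FA (by intro y hy; exact (Finset.mem_filter.mp hy).2)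
        (lt_of_le_of_lt (Finset.card_filter_le _ _) hFcard)
    have hA'conn : (G.induce (A' \ ↑FA')).Connected :=
      hA'.1 FA' (by intro y hy; exact (Finset.mem_filter.mp hy).2)
        (lt_of_le_of_lt (Finset.card_filter_le _ _) hFcard)
    have hEA : A \ (↑FA : Set V) = A \ ↑F := by
      ext y
      simp only [Set.mem_diff, hFA, Finset.coe_filter, Set.mem_setOf_eq]
      tauto
    have hEA' : A' \ (↑FA' : Set V) = A' \ ↑F := by
      ext y
      simp only [Set.mem_diff, hFA', Finset.coe_filter, Set.mem_setOf_eq]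
      tauto
    rw [hEA] at hAconn
    rw [hEA'] at hA'conn
    have hunion : (A \ ↑F) ∪ (A' \ ↑F) = (A ∪ A') \ (↑F : Set V) := by
      rw [Set.union_diff_distrib]
    have := SimpleGraph.induce_union_connected hAconn.preconnected hA'conn.preconnected
      ⟨x, ⟨hxAA.1, hxF⟩, ⟨hxAA.2, hxF⟩⟩
    rwa [hunion] at this
  have h1 := hA.2 (A ∪ A') Set.subset_union_left hspan
  have h2 := hA'.2 (A ∪ A') Set.subset_union_right hspan
  exact hne (h1.symm.trans h2)
end

section
/- Let G be a graph, n ≥ 1 a natural number, and let a be a set of at least n vertices of G. Then there is at most one maximal n-connected set A of vertices of G with a ⊆ A. -/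
private lemma reach_mono' {V : Type*} (G : SimpleGraph V) {S T : Set V} (h : S ⊆ T)
    {u v : V} (hu : u ∈ S) (hv : v ∈ S)
    (hr : (G.induce S).Reachable ⟨u, hu⟩ ⟨v, hv⟩) :
    (G.induce T).Reachable ⟨u, h hu⟩ ⟨v, h hv⟩ := by
  let f : G.induce S →g G.induce T := ⟨fun x => ⟨x.1, h x.2⟩, fun hadj => hadj⟩
  exact hr.map f

private lemma spans_union {V : Type*} (G : SimpleGraph V) (n : ℕ) {A A' : Set V}
    (hA : SpansNConnected G n A) (hA' : SpansNConnected G n A')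
    (hz : ∀ F : Finset V, F.card < n → ∃ z ∈ A ∩ A', z ∉ F) :
    SpansNConnected G n (A ∪ A') := by
  classical
  intro F hF hcard
  obtain ⟨z, hzAA', hzF⟩ := hz F hcard
  set FA := F.filter (· ∈ A) with hFA
  set FA' := F.filter (· ∈ A') with hFA'
  have hconnA := hA FA (by intro x hx; exact (Finset.mem_filter.mp hx).2)
    (lt_of_le_of_lt (Finset.card_filter_le _ _) hcard)
  have hconnA' := hA' FA' (by intro x hx; exact (Finset.mem_filter.mp hx).2)
    (lt_of_le_of_lt (Finset.card_filter_le _ _) hcard)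
  have hsubA : A \ ↑FA ⊆ (A ∪ A') \ ↑F := by
    rintro x ⟨hxA, hxFA⟩
    refine ⟨Or.inl hxA, fun hxF => hxFA ?_⟩
    exact Finset.mem_filter.mpr ⟨hxF, hxA⟩
  have hsubA' : A' \ ↑FA' ⊆ (A ∪ A') \ ↑F := by
    rintro x ⟨hxA, hxFA⟩
    refine ⟨Or.inr hxA, fun hxF => hxFA ?_⟩
    exact Finset.mem_filter.mpr ⟨hxF, hxA⟩
  have hzA : z ∈ A \ ↑FA := ⟨hzAA'.1, fun hmem => hzF (Finset.mem_filter.mp hmem).1⟩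
  have hzA' : z ∈ A' \ ↑FA' := ⟨hzAA'.2, fun hmem => hzF (Finset.mem_filter.mp hmem).1⟩
  have hzU : z ∈ (A ∪ A') \ ↑F := hsubA hzA
  -- every vertex reaches z
  have key : ∀ x : ((A ∪ A') \ ↑F : Set V),
      (G.induce ((A ∪ A') \ ↑F)).Reachable x ⟨z, hzU⟩ := by
    rintro ⟨x, hxU, hxF⟩
    rcases hxU with hxA | hxA'
    · have hx : x ∈ A \ ↑FA := ⟨hxA, fun hmem => hxF (Finset.mem_filter.mp hmem).1⟩
      exact reach_mono' G hsubA hx hzA (hconnA.preconnected ⟨x, hx⟩ ⟨z, hzA⟩)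
    · have hx : x ∈ A' \ ↑FA' := ⟨hxA', fun hmem => hxF (Finset.mem_filter.mp hmem).1⟩
      exact reach_mono' G hsubA' hx hzA' (hconnA'.preconnected ⟨x, hx⟩ ⟨z, hzA'⟩)
  haveI : Nonempty ((A ∪ A') \ ↑F : Set V) := ⟨⟨z, hzU⟩⟩
  exact SimpleGraph.Connected.mk fun u v => (key u).trans (key v).symm

/-- A set of at least `n` vertices is contained in at most one maximal `n`-connected
set. -/
theorem maximal_nconnected_unique {V : Type*} (G : SimpleGraph V) (n : ℕ) (hn : 1 ≤ n)
    (a : Set V) (ha : (n : Cardinal) ≤ Cardinal.mk ↥a) :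
    ∀ A A' : Set V, MaximalNConnected G n A → MaximalNConnected G n A' →
      a ⊆ A → a ⊆ A' → A = A' := by
  intro A A' hA hA' haA haA'
  have hz : ∀ F : Finset V, F.card < n → ∃ z ∈ A ∩ A', z ∉ F := by
    intro F hcard
    by_contra h
    push_neg at h
    have hsub : a ⊆ ↑F := fun x hx => h x ⟨haA hx, haA' hx⟩
    have : Cardinal.mk ↥a ≤ (F.card : Cardinal) := by
      calc Cardinal.mk ↥a ≤ Cardinal.mk ↥(↑F : Set V) := Cardinal.mk_le_mk_of_subset hsub
        _ = F.card := Cardinal.mk_coe_finset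
    have : (n : Cardinal) ≤ (F.card : Cardinal) := ha.trans this
    exact absurd (Nat.cast_le.mp this) (not_le.mpr hcard)
  have hU := spans_union G n hA.1 hA'.1 hz
  have h1 : A ∪ A' = A := hA.2 _ Set.subset_union_left hU
  have h2 : A ∪ A' = A' := hA'.2 _ Set.subset_union_right hU
  rw [← h1, h2]
end

section
/- Let G be a graph, n ≥ 1 a natural number, A a maximal n-connected set of vertices of G, and x a vertex of G with x ∉ A. Then x has fewer than n neighbors in A, i.e., |N_G(x) ∩ A| < n. -/
lemma induce_insert_connected {V : Type*} (G : SimpleGraph V) (S : Set V)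
    (hS : (G.induce S).Connected) (x s : V) (hs : s ∈ S) (hadj : G.Adj x s) :
    (G.induce (insert x S)).Connected := by
  let hom : G.induce S →g G.induce (insert x S) :=
    ⟨fun v => ⟨v.1, Set.mem_insert_of_mem _ v.2⟩, fun h => h⟩
  have hsmem : (s : V) ∈ insert x S := Set.mem_insert_of_mem _ hs
  have key : ∀ u : ↥(insert x S), (G.induce (insert x S)).Reachable u ⟨s, hsmem⟩ := by
    rintro ⟨u, hu⟩
    rcases hu with rfl | hu
    · exact SimpleGraph.Adj.reachable hadj
    · have := (hS.preconnected ⟨u, hu⟩ ⟨s, hs⟩).map hom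
      convert this using 2 <;> rfl
  haveI : Nonempty ↥(insert x S) := ⟨⟨s, hsmem⟩⟩
  exact ⟨fun u v => (key u).trans (key v).symm⟩

/-- A vertex outside a maximal `n`-connected set `A` has fewer than `n` neighbors
in `A`. -/
theorem maximal_nconnected_neighbors_lt {V : Type*} (G : SimpleGraph V) (n : ℕ)
    (hn : 1 ≤ n) (A : Set V) (hA : MaximalNConnected G n A) (x : V) (hx : x ∉ A) :
    Cardinal.mk ↥(G.neighborSet x ∩ A) < (n : Cardinal) := by
  classical
  by_contra h
  push_neg at h
  -- Claim: insert x A spans an n-connected subgraph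
  have hspan : SpansNConnected G n (insert x A) := by
    intro F hF hFcard
    by_cases hxF : x ∈ F
    · -- remove x from F
      have hsub : ↑(F.erase x) ⊆ A := by
        intro y hy
        simp only [Finset.coe_erase, Set.mem_diff, Set.mem_singleton_iff] at hy
        rcases hF hy.1 with rfl | hyA
        · exact absurd rfl hy.2
        · exact hyA
      have hcard : (F.erase x).card < n :=
        lt_trans (Finset.card_erase_lt_of_mem hxF) hFcard
      have hconn := hA.1 (F.erase x) hsub hcard
      have hset : insert x A \ ↑F = A \ ↑(F.erase x) := by
        ext v
        simp only [Set.mem_diff, Set.mem_insert_iff, Finset.coe_erase, Set.mem_diff,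
          Set.mem_singleton_iff, Finset.mem_coe]
        constructor
        · rintro ⟨rfl | hvA, hvF⟩
          · exact absurd hxF hvF
          · exact ⟨hvA, fun h' => hvF h'.1⟩
        · rintro ⟨hvA, hvF⟩
          refine ⟨Or.inr hvA, fun hvinF => hvF ⟨hvinF, ?_⟩⟩
          rintro rfl; exact hx hvA
      rw [hset]
      exact hconn
    · -- x ∉ F, so F ⊆ A
      have hsub : ↑F ⊆ A := by
        intro y hy
        rcases hF hy with rfl | hyA
        · exact absurd hy hxF
        · exact hyA
      have hconn := hA.1 F hsub hFcard
      -- find a neighbor s of x in A not in F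
      have hex : ∃ s, s ∈ G.neighborSet x ∩ A ∧ s ∉ F := by
        by_contra hcon
        push_neg at hcon
        have hsub2 : G.neighborSet x ∩ A ⊆ ↑F := fun y hy => hcon y hy
        have : Cardinal.mk ↥(G.neighborSet x ∩ A) ≤ Cardinal.mk ↥(↑F : Set V) :=
          Cardinal.mk_le_mk_of_subset hsub2
        have hFmk : Cardinal.mk ↥(↑F : Set V) = (F.card : Cardinal) := by
          simp [Cardinal.mk_coe_finset]
        rw [hFmk] at this
        have : (n : Cardinal) ≤ (F.card : Cardinal) := le_trans h this
        have := Nat.cast_le.mp this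
        omega
      obtain ⟨s, ⟨hsN, hsA⟩, hsF⟩ := hex
      have hsmem : s ∈ A \ ↑F := ⟨hsA, hsF⟩
      have hset : insert x A \ ↑F = insert x (A \ ↑F) := by
        ext v
        simp only [Set.mem_diff, Set.mem_insert_iff, Finset.mem_coe]
        constructor
        · rintro ⟨rfl | hvA, hvF⟩
          · exact Or.inl rfl
          · exact Or.inr ⟨hvA, hvF⟩
        · rintro (rfl | ⟨hvA, hvF⟩)
          · exact ⟨Or.inl rfl, hxF⟩
          · exact ⟨Or.inr hvA, hvF⟩
      rw [hset]
      exact induce_insert_connected G _ hconn x s hsmem hsN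
  have := hA.2 (insert x A) (Set.subset_insert x A) hspan
  apply hx
  rw [← this]
  exact Set.mem_insert x A
end

section
/- Let G be a graph and n ≥ 1 a natural number. Suppose A_i (for i < n) are sets of vertices each spanning an n-connected subgraph of G, and there are pairwise distinct vertices y_{i,k} (for i < n, k < n) and x_k (for k < n), all n² + n of them distinct, such that y_{i,k} ∈ A_i and y_{i,k} is adjacent to x_k in G for all i < n and k < n. Then the set A = ⋃_{i<n} A_i ∪ {x_k : k < n} spans an n-connected subgraph of G. -/
private lemma reach_induce_mono {V : Type*} (G : SimpleGraph V) {S T : Set V} (h : S ⊆ T)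
    {u v : S} (hr : (G.induce S).Reachable u v) :
    (G.induce T).Reachable ⟨u, h u.2⟩ ⟨v, h v.2⟩ := by
  let f : G.induce S →g G.induce T := ⟨Set.inclusion h, fun {a b} hab => hab⟩
  exact hr.map f

/-- Joining `n`-connected sets: if each `A i` (`i < n`) spans an `n`-connected
subgraph and there are `n² + n` pairwise distinct vertices `y i k` and `x k`
(`i, k < n`) with `y i k ∈ A i` adjacent to `x k`, then
`⋃ i, A i ∪ {x k : k < n}` spans an `n`-connected subgraph. -/
theorem spansNConnected_union {V : Type*} (G : SimpleGraph V) (n : ℕ) (hn : 1 ≤ n)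
    (A : Fin n → Set V) (hA : ∀ i, SpansNConnected G n (A i))
    (y : Fin n → Fin n → V) (x : Fin n → V)
    (hmem : ∀ i k, y i k ∈ A i)
    (hadj : ∀ i k, G.Adj (x k) (y i k))
    (hdist : Function.Injective
      (Sum.elim (fun q : Fin n × Fin n => y q.1 q.2) x)) :
    SpansNConnected G n ((⋃ i, A i) ∪ Set.range x) := by
  classical
  intro F hF hcard
  set B : Set V := ((⋃ i, A i) ∪ Set.range x) \ ↑F with hBdef
  -- distinctness facts
  have hx_inj : Function.Injective x := by
    intro k k' h
    have := hdist (a₁ := Sum.inr k) (a₂ := Sum.inr k') (by simpa using h)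
    simpa using this
  have hy_inj : ∀ {i k i' k'}, y i k = y i' k' → i = i' ∧ k = k' := by
    intro i k i' k' h
    have := hdist (a₁ := Sum.inl (i, k)) (a₂ := Sum.inl (i', k')) (by simpa using h)
    simpa [Prod.ext_iff] using this
  have hxy : ∀ k i k', x k ≠ y i k' := by
    intro k i k' h
    have := hdist (a₁ := Sum.inr k) (a₂ := Sum.inl (i, k')) (by simpa using h)
    simp at this
  -- each A i minus F is connected
  have hAconn : ∀ i, (G.induce (A i \ ↑F)).Connected := by
    intro i
    have hsub : ↑(F.filter (· ∈ A i)) ⊆ A i := by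
      intro a ha
      simp only [Finset.coe_filter, Set.mem_setOf_eq] at ha
      exact ha.2
    have h1 := hA i (F.filter (· ∈ A i)) hsub
      (lt_of_le_of_lt (Finset.card_filter_le _ _) hcard)
    have hset : A i \ ↑(F.filter (· ∈ A i)) = A i \ ↑F := by
      ext a
      simp only [Set.mem_diff, Finset.coe_filter, Set.mem_setOf_eq, Finset.mem_coe]
      tauto
    rwa [hset] at h1
  have hsubB : ∀ i, A i \ ↑F ⊆ B := by
    intro i a ha
    exact ⟨Or.inl (Set.mem_iUnion.2 ⟨i, ha.1⟩), ha.2⟩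
  -- find good k
  have hfind : ∀ i j : Fin n, ∃ k, x k ∉ F ∧ y i k ∉ F ∧ y j k ∉ F := by
    intro i j
    by_contra hcon
    push_neg at hcon
    set f : Fin n → V := fun k => if x k ∈ F then x k else if y i k ∈ F then y i k else y j k
      with hfdef
    have hfF : ∀ k, f k ∈ F := by
      intro k
      simp only [hfdef]
      split_ifs with h1 h2
      · exact h1
      · exact h2
      · exact hcon k h1 h2
    have hinj : Function.Injective f := by
      intro k k' h
      simp only [hfdef] at h
      split_ifs at h with h1 h2 h3 h4 h5 h6 h7 h8 <;>
        first
          | exact hx_inj h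
          | exact (hy_inj h).2
          | exact absurd h (hxy _ _ _)
          | exact absurd h.symm (hxy _ _ _)
    have hle : n ≤ F.card := by
      have := Fintype.card_le_of_injective (fun k => (⟨f k, hfF k⟩ : F))
        (fun a b hab => hinj (Subtype.ext_iff.mp hab))
      simpa using this
    omega
  set i0 : Fin n := ⟨0, hn⟩ with hi0
  obtain ⟨⟨b, hb⟩⟩ := (hAconn i0).nonempty
  -- adjacency gives reachability in induced graph
  have adjB : ∀ {u v : V} (hu : u ∈ B) (hv : v ∈ B), G.Adj u v →
      (G.induce B).Reachable ⟨u, hu⟩ ⟨v, hv⟩ := by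
    intro u v hu hv h
    exact SimpleGraph.Adj.reachable h
  have key : ∀ (i : Fin n) (u : V) (hu : u ∈ A i \ ↑F),
      (G.induce B).Reachable ⟨u, hsubB i hu⟩ ⟨b, hsubB i0 hb⟩ := by
    intro i u hu
    obtain ⟨k, hxk, hyik, hy0k⟩ := hfind i i0
    have hyik' : y i k ∈ A i \ ↑F := ⟨hmem i k, hyik⟩
    have hy0k' : y i0 k ∈ A i0 \ ↑F := ⟨hmem i0 k, hy0k⟩
    have hxkB : x k ∈ B := ⟨Or.inr ⟨k, rfl⟩, hxk⟩
    have r1 : (G.induce B).Reachable ⟨u, hsubB i hu⟩ ⟨y i k, hsubB i hyik'⟩ :=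
      reach_induce_mono G (hsubB i)
        ((hAconn i).preconnected ⟨u, hu⟩ ⟨y i k, hyik'⟩)
    have r2 := adjB (hsubB i hyik') hxkB (hadj i k).symm
    have r3 := adjB hxkB (hsubB i0 hy0k') (hadj i0 k)
    have r4 : (G.induce B).Reachable ⟨y i0 k, hsubB i0 hy0k'⟩ ⟨b, hsubB i0 hb⟩ :=
      reach_induce_mono G (hsubB i0)
        ((hAconn i0).preconnected ⟨y i0 k, hy0k'⟩ ⟨b, hb⟩)
    exact r1.trans (r2.trans (r3.trans r4))
  have toB : ∀ (u : V) (hu : u ∈ B), (G.induce B).Reachable ⟨u, hu⟩ ⟨b, hsubB i0 hb⟩ := by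
    intro u hu
    obtain ⟨hu1, hu2⟩ := hu
    rcases hu1 with hmemU | ⟨k, rfl⟩
    · obtain ⟨i, hi⟩ := Set.mem_iUnion.mp hmemU
      exact key i u ⟨hi, hu2⟩
    · have hxkB : x k ∈ B := ⟨Or.inr ⟨k, rfl⟩, hu2⟩
      obtain ⟨i, hyi⟩ : ∃ i, y i k ∉ F := by
        by_contra hcon
        push_neg at hcon
        have hle : n ≤ F.card := by
          have := Fintype.card_le_of_injective (fun i => (⟨y i k, hcon i⟩ : F))
            (fun a b hab => (hy_inj (Subtype.ext_iff.mp hab)).1)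
          simpa using this
        omega
      have r := adjB hxkB (hsubB i ⟨hmem i k, hyi⟩) (hadj i k)
      exact r.trans (key i (y i k) ⟨hmem i k, hyi⟩)
  have : Nonempty ↥B := ⟨⟨b, hsubB i0 hb⟩⟩
  exact ⟨fun u v => (toB u.1 u.2).trans ((toB v.1 v.2).symm)⟩
end
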